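/- Let (X, σ) be a subshift and suppose x₁, …, x_d ∈ X are generic points for pairwise distinct measures μ₁, …, μ_d. Then there exist words w_{(j₁,j₂)} in the language of X for each pair 1 ≤ j₁ < j₂ ≤ d with μ_{j₁}([w_{(j₁,j₂)}]) ≠ μ_{j₂}([w_{(j₁,j₂)}]), and for all sufficiently large ℓ and all admissible starting positions, any word of length ℓ occurring in x_{i₁} (at position ≥ M) differs from any word of length ℓ occurring in x_{i₂} (at position ≥ M and ≤ a linear bound) whenever i₁ ≠ i₂; that is, the sets W_i of such length-ℓ subwords of x_i are pairwise disjoint. -/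

import Mathlib

open MeasureTheory Filter
open scoped ENNReal

/-- The left shift on bi-infinite sequences. -/
def shift {A : Type*} (x : ℤ → A) : ℤ → A := fun n => x (n + 1)

/-- A subshift: a closed, shift-invariant subset of `A^ℤ`. -/
def IsSubshift {A : Type*} [TopologicalSpace A] (X : Set (ℤ → A)) : Prop :=
  IsClosed X ∧ shift '' X = X

/-- The word complexity `P_X(n)`: the number of words of length `n` occurring in `X`. -/
noncomputable def complexity {A : Type*} (X : Set (ℤ → A)) (n : ℕ) : ℕ :=
  Nat.card {w : Fin n → A // ∃ x ∈ X, ∃ m : ℤ, ∀ t : Fin n, x (m + (t : ℕ)) = w t}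

/-- `x` is a generic point for the measure `μ`. -/
def IsGenericPt {A : Type*} [TopologicalSpace A] [MeasurableSpace A]
    (μ : Measure (ℤ → A)) (x : ℤ → A) : Prop :=
  ∀ f : (ℤ → A) → ℝ, Continuous f →
    Tendsto (fun N : ℕ => (∑ n ∈ Finset.range N, f (shift^[n] x)) / (N : ℝ))
      atTop (nhds (∫ y, f y ∂μ))

/-- A generic measure on the subshift `X`: a Borel probability measure carried by `X`
possessing a generic point in `X`. -/
def GenericMeasureOn {A : Type*} [TopologicalSpace A] [MeasurableSpace A]
    (X : Set (ℤ → A)) (μ : Measure (ℤ → A)) : Prop :=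
  IsProbabilityMeasure μ ∧ μ X = 1 ∧ ∃ x ∈ X, IsGenericPt μ x

/-- The cylinder set of a word `w` (at position `0`). -/
def cyl {A : Type*} {r : ℕ} (w : Fin r → A) : Set (ℤ → A) :=
  {y | ∀ t : Fin r, y ((t : ℕ) : ℤ) = w t}

/-- `w` occurs in the subshift `X`. -/
def InLanguage {A : Type*} (X : Set (ℤ → A)) {r : ℕ} (w : Fin r → A) : Prop :=
  ∃ x ∈ X, ∃ m : ℤ, ∀ t : Fin r, x (m + (t : ℕ)) = w t

namespace DWS

variable {A : Type*}

/-- Shift by an integer amount. -/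
def shiftZ (m : ℤ) (y : ℤ → A) : ℤ → A := fun n => y (n + m)

lemma shift_iterate (y : ℤ → A) (n : ℕ) : shift^[n] y = shiftZ n y := by
  induction n with
  | zero => funext k; simp [shiftZ]
  | succ n ih =>
      funext k
      rw [Function.iterate_succ_apply', ih]
      show y (k + 1 + (n : ℤ)) = y (k + ((n : ℕ) + 1 : ℤ))
      congr 1
      push_cast
      ring

lemma shiftZ_shiftZ (m k : ℤ) (y : ℤ → A) :
    shiftZ m (shiftZ k y) = shiftZ (k + m) y := by
  funext n
  simp only [shiftZ]
  congr 1
  ring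

lemma shiftZ_zero (y : ℤ → A) : shiftZ 0 y = y := by
  funext n; simp [shiftZ]

lemma continuous_shiftZ [TopologicalSpace A] (m : ℤ) :
    Continuous (shiftZ m : (ℤ → A) → (ℤ → A)) :=
  continuous_pi fun n => continuous_apply (n + m)

/-- Indicator function of a cylinder. -/
noncomputable def ind {r : ℕ} (w : Fin r → A) : (ℤ → A) → ℝ :=
  (cyl w).indicator fun _ => 1

lemma ind_nonneg {r : ℕ} (w : Fin r → A) (y : ℤ → A) : 0 ≤ ind w y := by
  classical
  by_cases h : y ∈ cyl w <;> simp [ind, h]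

lemma ind_le_one {r : ℕ} (w : Fin r → A) (y : ℤ → A) : ind w y ≤ 1 := by
  classical
  by_cases h : y ∈ cyl w <;> simp [ind, h]

lemma ind_congr {r : ℕ} (w : Fin r → A) {y z : ℤ → A}
    (h : ∀ t : Fin r, y ((t : ℕ) : ℤ) = z ((t : ℕ) : ℤ)) : ind w y = ind w z := by
  classical
  have hmem : y ∈ cyl w ↔ z ∈ cyl w := by
    constructor <;> intro hm t
    · rw [← h t]; exact hm t
    · rw [h t]; exact hm t
  simp only [ind]
  by_cases hy : y ∈ cyl w
  · rw [Set.indicator_of_mem hy, Set.indicator_of_mem (hmem.mp hy)]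
  · rw [Set.indicator_of_notMem hy,
      Set.indicator_of_notMem (fun hz => hy (hmem.mpr hz))]

lemma isClopen_cyl [TopologicalSpace A] [DiscreteTopology A] {r : ℕ} (w : Fin r → A) :
    IsClopen (cyl w) := by
  have h : cyl w = ⋂ t : Fin r, (fun y : ℤ → A => y ((t : ℕ) : ℤ)) ⁻¹' {w t} := by
    ext y; simp [cyl]
  rw [h]
  exact isClopen_iInter_of_finite fun t =>
    (isClopen_discrete _).preimage (continuous_apply _)

lemma continuous_ind [TopologicalSpace A] [DiscreteTopology A] {r : ℕ} (w : Fin r → A) :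
    Continuous (ind w) :=
  continuous_indicator (by simp [(isClopen_cyl w).frontier_eq])
    continuous_const.continuousOn

lemma measurableSet_cyl [Fintype A] [TopologicalSpace A] [DiscreteTopology A]
    [MeasurableSpace A] [BorelSpace A] {r : ℕ} (w : Fin r → A) :
    MeasurableSet (cyl w) :=
  (isClopen_cyl w).isOpen.measurableSet

lemma sum_ind_nonneg {r : ℕ} (w : Fin r → A) (x : ℤ → A) (N : ℕ) :
    0 ≤ ∑ n ∈ Finset.range N, ind w (shiftZ (n : ℤ) x) :=
  Finset.sum_nonneg fun n _ => ind_nonneg w _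

lemma sum_ind_le {r : ℕ} (w : Fin r → A) (x : ℤ → A) (N : ℕ) :
    ∑ n ∈ Finset.range N, ind w (shiftZ (n : ℤ) x) ≤ N := by
  have := Finset.sum_le_card_nsmul (Finset.range N)
    (fun n => ind w (shiftZ (n : ℤ) x)) 1 (fun n _ => ind_le_one w _)
  simpa using this

end DWS

namespace DWS

variable {A : Type*} [Fintype A] [TopologicalSpace A] [DiscreteTopology A]
  [MeasurableSpace A] [BorelSpace A]

lemma tendsto_avg (μ : Measure (ℤ → A)) (x : ℤ → A) (hg : IsGenericPt μ x)
    {r : ℕ} (w : Fin r → A) (m : ℤ) :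
    Tendsto (fun N : ℕ => (∑ n ∈ Finset.range N, ind w (shiftZ ((n : ℤ) + m) x)) / (N : ℝ))
      atTop (nhds ((μ (shiftZ m ⁻¹' cyl w)).toReal)) := by
  have hc : Continuous (fun y : ℤ → A => ind w (shiftZ m y)) :=
    (continuous_ind w).comp (continuous_shiftZ m)
  have h := hg _ hc
  have hms : MeasurableSet (shiftZ m ⁻¹' cyl w) :=
    (measurableSet_cyl w).preimage (continuous_shiftZ m).measurable
  have hfun : (fun y : ℤ → A => ind w (shiftZ m y))
      = (shiftZ m ⁻¹' cyl w).indicator (1 : (ℤ → A) → ℝ) := by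
    classical
    funext y
    by_cases hy : shiftZ m y ∈ cyl w
    · rw [ind, Set.indicator_of_mem hy, Set.indicator_of_mem (Set.mem_preimage.mpr hy)]
      rfl
    · rw [ind, Set.indicator_of_notMem hy,
        Set.indicator_of_notMem (fun hz => hy (Set.mem_preimage.mp hz))]
  have hint : ∫ y, ind w (shiftZ m y) ∂μ = (μ (shiftZ m ⁻¹' cyl w)).toReal := by
    rw [show (fun y : ℤ → A => ind w (shiftZ m y)) = _ from hfun]
    exact integral_indicator_one hms
  rw [hint] at h
  refine h.congr fun N => ?_
  congr 1
  refine Finset.sum_congr rfl fun n _ => ?_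
  rw [shift_iterate, shiftZ_shiftZ]

lemma tendsto_avg0 (μ : Measure (ℤ → A)) (x : ℤ → A) (hg : IsGenericPt μ x)
    {r : ℕ} (w : Fin r → A) :
    Tendsto (fun N : ℕ => (∑ n ∈ Finset.range N, ind w (shiftZ (n : ℤ) x)) / (N : ℝ))
      atTop (nhds ((μ (cyl w)).toReal)) := by
  have hpre : (shiftZ (0 : ℤ) : (ℤ → A) → _) ⁻¹' cyl w = cyl w := by
    have h0 : (shiftZ (0 : ℤ) : (ℤ → A) → _) = id := funext fun y => shiftZ_zero y
    rw [h0, Set.preimage_id]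
  have h := tendsto_avg μ x hg w 0
  rw [hpre] at h
  refine h.congr fun N => ?_
  congr 1

end DWS

namespace DWS

variable {A : Type*} [Fintype A] [TopologicalSpace A] [DiscreteTopology A]
  [MeasurableSpace A] [BorelSpace A]

lemma measure_preimage_toReal (μ : Measure (ℤ → A)) (x : ℤ → A) (hg : IsGenericPt μ x)
    {r : ℕ} (w : Fin r → A) (m : ℤ) :
    (μ (shiftZ m ⁻¹' cyl w)).toReal = (μ (cyl w)).toReal := by
  set v : ℤ → ℝ := fun m => (μ (shiftZ m ⁻¹' cyl w)).toReal with hv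
  have hstep : ∀ m : ℤ, v (m + 1) = v m := by
    intro m
    have h1 := tendsto_avg μ x hg w m
    have h2 := tendsto_avg μ x hg w (m + 1)
    have hdiff : Tendsto (fun N : ℕ =>
        (∑ n ∈ Finset.range N, ind w (shiftZ ((n : ℤ) + (m + 1)) x)) / (N : ℝ)
        - (∑ n ∈ Finset.range N, ind w (shiftZ ((n : ℤ) + m) x)) / (N : ℝ))
        atTop (nhds 0) := by
      apply squeeze_zero_norm (a := fun N : ℕ => 2 / (N : ℝ))
      · intro N
        have heq : (∑ n ∈ Finset.range N, ind w (shiftZ ((n : ℤ) + (m + 1)) x))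
            - (∑ n ∈ Finset.range N, ind w (shiftZ ((n : ℤ) + m) x))
            = ind w (shiftZ ((N : ℤ) + m) x) - ind w (shiftZ m x) := by
          rw [← Finset.sum_sub_distrib]
          have hs := Finset.sum_range_sub (fun k : ℕ => ind w (shiftZ ((k : ℤ) + m) x)) N
          simp only [Nat.cast_zero, zero_add] at hs
          rw [← hs]
          refine Finset.sum_congr rfl fun n _ => ?_
          congr 3
          push_cast
          ring
        rw [div_sub_div_same, heq, Real.norm_eq_abs, abs_div, Nat.abs_cast]
        rcases Nat.eq_zero_or_pos N with rfl | hN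
        · simp
        · have hnum : |ind w (shiftZ ((N : ℤ) + m) x) - ind w (shiftZ m x)| ≤ 2 := by
            have h1 := ind_nonneg w (shiftZ ((N : ℤ) + m) x)
            have h2 := ind_le_one w (shiftZ ((N : ℤ) + m) x)
            have h3 := ind_nonneg w (shiftZ m x)
            have h4 := ind_le_one w (shiftZ m x)
            rw [abs_le]
            constructor <;> linarith
          have hNpos : (0 : ℝ) < N := by exact_mod_cast hN
          exact (div_le_div_iff_of_pos_right hNpos).mpr hnum
      · exact tendsto_const_div_atTop_nhds_zero_nat 2
    have := tendsto_nhds_unique (h2.sub h1) hdiff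
    linarith [this]
  have hall : ∀ m : ℤ, v m = v 0 := by
    intro m
    induction m using Int.induction_on with
    | zero => rfl
    | succ i ih => rw [hstep i, ih]
    | pred i ih =>
        have e : (-(i : ℤ) - 1) + 1 = -(i : ℤ) := by ring
        rw [← e, hstep] at ih
        exact ih
  have h0 : v 0 = (μ (cyl w)).toReal := by
    have h00 : (shiftZ (0 : ℤ) : (ℤ → A) → _) = id := funext fun y => shiftZ_zero y
    simp only [hv, h00, Set.preimage_id]
  exact (hall m).trans h0

end DWS

namespace DWS

variable {A : Type*}

/-- The word of length `2k` read in the window `[-k, k)`. -/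
def wordOf (k : ℕ) (y : ℤ → A) : Fin (2 * k) → A := fun t => y ((t : ℕ) - (k : ℤ))

/-- The set of points whose window `[-k,k)` reads `w`. -/
def SetAt (k : ℕ) (w : Fin (2 * k) → A) : Set (ℤ → A) := wordOf k ⁻¹' {w}

lemma SetAt_eq (k : ℕ) (w : Fin (2 * k) → A) :
    SetAt k w = shiftZ (-(k : ℤ)) ⁻¹' cyl w := by
  ext y
  simp only [SetAt, Set.mem_preimage, Set.mem_singleton_iff, cyl, Set.mem_setOf_eq,
    funext_iff, wordOf, shiftZ, sub_eq_add_neg]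

section Meas

variable [Fintype A] [TopologicalSpace A] [DiscreteTopology A]
  [MeasurableSpace A] [BorelSpace A]

lemma measurableSet_SetAt (k : ℕ) (w : Fin (2 * k) → A) : MeasurableSet (SetAt k w) := by
  rw [SetAt_eq]
  exact (measurableSet_cyl w).preimage (continuous_shiftZ _).measurable

lemma exists_cyl_ne (μ ν : Measure (ℤ → A)) [IsProbabilityMeasure μ] [IsProbabilityMeasure ν]
    (xμ xν : ℤ → A) (hgμ : IsGenericPt μ xμ) (hgν : IsGenericPt ν xν) (hne : μ ≠ ν) :
    ∃ (r : ℕ) (w : Fin r → A), μ (cyl w) ≠ ν (cyl w) := by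
  classical
  by_contra hcon
  push_neg at hcon
  apply hne
  have hSetAt : ∀ (k : ℕ) (w : Fin (2 * k) → A), μ (SetAt k w) = ν (SetAt k w) := by
    intro k w
    rw [SetAt_eq]
    have h1 := measure_preimage_toReal μ xμ hgμ w (-(k : ℤ))
    have h2 := measure_preimage_toReal ν xν hgν w (-(k : ℤ))
    rw [← ENNReal.toReal_eq_toReal_iff' (measure_ne_top μ _) (measure_ne_top ν _), h1, h2,
      ENNReal.toReal_eq_toReal_iff' (measure_ne_top μ _) (measure_ne_top ν _)]
    exact hcon _ w
  refine ext_of_generate_finite (measurableCylinders fun _ : ℤ => A)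
    generateFrom_measurableCylinders.symm isPiSystem_measurableCylinders ?_ (by simp)
  intro s hs
  rw [mem_measurableCylinders] at hs
  obtain ⟨I, S, -, rfl⟩ := hs
  set k : ℕ := (I.sup fun i => i.natAbs) + 1 with hk
  have hIk : ∀ i ∈ I, (i : ℤ).natAbs < k := fun i hi =>
    Nat.lt_succ_of_le (Finset.le_sup hi)
  have hidx : ∀ i : I, ((i : ℤ) + (k : ℤ)).toNat < 2 * k := by
    intro i
    have := hIk i i.2
    omega
  set T : Set (Fin (2 * k) → A) :=
    {w | (fun i : I => w ⟨((i : ℤ) + (k : ℤ)).toNat, hidx i⟩) ∈ S} with hT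
  have hmem : ∀ y : ℤ → A, y ∈ cylinder I S ↔ wordOf k y ∈ T := by
    intro y
    rw [mem_cylinder]
    have : I.restrict y = fun i : I => wordOf k y ⟨((i : ℤ) + (k : ℤ)).toNat, hidx i⟩ := by
      funext i
      show y i = y ((((i : ℤ) + (k : ℤ)).toNat : ℤ) - (k : ℤ))
      congr 1
      have := hIk i i.2
      omega
    rw [this]
    rfl
  have hdecomp : cylinder I S = ⋃ w ∈ T.toFinset, SetAt k w := by
    ext y
    rw [hmem y]
    simp only [Set.mem_iUnion, Set.mem_toFinset]
    constructor
    · intro h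
      exact ⟨wordOf k y, h, rfl⟩
    · rintro ⟨w, hw, hyw⟩
      rw [show w = wordOf k y from (Set.mem_singleton_iff.mp hyw).symm] at hw
      exact hw
  have hdisj : (↑T.toFinset : Set (Fin (2 * k) → A)).PairwiseDisjoint (SetAt k) := by
    intro w₁ _ w₂ _ hww
    exact Set.disjoint_left.mpr fun y hy₁ hy₂ =>
      hww ((Set.mem_singleton_iff.mp hy₁).symm.trans (Set.mem_singleton_iff.mp hy₂))
  rw [hdecomp, measure_biUnion_finset hdisj fun w _ => measurableSet_SetAt k w,
    measure_biUnion_finset hdisj fun w _ => measurableSet_SetAt k w]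
  exact Finset.sum_congr rfl fun w _ => hSetAt k w

end Meas

end DWS

namespace DWS

lemma sum_approx {S : ℕ → ℝ} {c η : ℝ}
    (h : Tendsto (fun N : ℕ => S N / (N : ℝ)) atTop (nhds c))
    (hb : ∀ N : ℕ, |S N| ≤ N) (hη : 0 < η) :
    ∃ C : ℝ, 0 ≤ C ∧ ∀ K : ℕ, |S K - c * K| ≤ η * K + C := by
  obtain ⟨K₀, hK₀⟩ := Metric.tendsto_atTop.mp h η hη
  refine ⟨(K₀ : ℝ) * (1 + |c|), by positivity, fun K => ?_⟩
  rcases le_or_gt (K₀ : ℝ) (K : ℝ) with hK | hK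
  · rcases Nat.eq_zero_or_pos K with rfl | hKpos
    · simp only [Nat.cast_zero, mul_zero, sub_zero]
      have h0 : |S 0| ≤ (0:ℝ) := by simpa using hb 0
      have hC : (0:ℝ) ≤ (K₀ : ℝ) * (1 + |c|) := by positivity
      linarith
    · have hdist := hK₀ K (by exact_mod_cast hK)
      rw [Real.dist_eq] at hdist
      have hKne : (K : ℝ) ≠ 0 := by positivity
      have hKnn : (0:ℝ) ≤ (K : ℝ) := Nat.cast_nonneg K
      have heq : S K - c * K = (S K / K - c) * K := by field_simp
      rw [heq, abs_mul, abs_of_nonneg hKnn]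
      have h1 : |S K / ↑K - c| * ↑K ≤ η * K := mul_le_mul_of_nonneg_right hdist.le hKnn
      have : (0:ℝ) ≤ (K₀ : ℝ) * (1 + |c|) := by positivity
      linarith
  · have h1 : |S K - c * K| ≤ |S K| + |c * K| := abs_sub _ _
    have h2 : |c * K| = |c| * K := by
      rw [abs_mul, Nat.abs_cast]
    have h3 : (K : ℝ) * (1 + |c|) ≤ (K₀ : ℝ) * (1 + |c|) := by
      apply mul_le_mul_of_nonneg_right hK.le
      positivity
    have h4 : (0:ℝ) ≤ η * K := by positivity
    have h5 := hb K
    rw [h2] at h1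
    nlinarith [abs_nonneg (S K), abs_nonneg c, Nat.cast_nonneg (α := ℝ) K]

variable {A : Type*} [Fintype A] [TopologicalSpace A] [DiscreteTopology A]
  [MeasurableSpace A] [BorelSpace A]

lemma inLanguage_of_pos (X : Set (ℤ → A)) (x : ℤ → A) (hx : x ∈ X) {r : ℕ} (w : Fin r → A)
    {c : ℝ}
    (h : Tendsto (fun N : ℕ => (∑ n ∈ Finset.range N, ind w (shiftZ (n : ℤ) x)) / (N : ℝ))
      atTop (nhds c)) (hc : 0 < c) : InLanguage X w := by
  classical
  have hex : ∃ N : ℕ, 0 < (∑ n ∈ Finset.range N, ind w (shiftZ (n : ℤ) x)) / (N : ℝ) := by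
    by_contra h'
    push_neg at h'
    have : c ≤ 0 := le_of_tendsto h (Filter.Eventually.of_forall h')
    linarith
  obtain ⟨N, hN⟩ := hex
  have hsum : (∑ n ∈ Finset.range N, ind w (shiftZ (n : ℤ) x)) ≠ 0 := by
    intro h0
    rw [h0] at hN
    simp at hN
  obtain ⟨n, -, hn⟩ := Finset.exists_ne_zero_of_sum_ne_zero hsum
  have hmem : shiftZ (n : ℤ) x ∈ cyl w := by
    by_contra hm
    exact hn (by rw [ind, Set.indicator_of_notMem hm])
  refine ⟨x, hx, (n : ℤ), fun t => ?_⟩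
  have := hmem t
  rw [shiftZ] at this
  rw [← this]
  congr 1
  ring

end DWS

namespace DWS

variable {A : Type*}

set_option maxHeartbeats 1600000 in
lemma pair_claim (x₁ x₂ : ℤ → A) {r : ℕ} (w : Fin r → A) {c₁ c₂ : ℝ}
    (h₁ : Tendsto (fun N : ℕ => (∑ n ∈ Finset.range N, ind w (shiftZ (n : ℤ) x₁)) / (N : ℝ))
      atTop (nhds c₁))
    (h₂ : Tendsto (fun N : ℕ => (∑ n ∈ Finset.range N, ind w (shiftZ (n : ℤ) x₂)) / (N : ℝ))
      atTop (nhds c₂))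
    (hne : c₁ ≠ c₂) :
    ∃ N₀ : ℕ, ∀ N : ℕ, N₀ ≤ N → ∀ L₁ L₂ : ℕ,
      (L₁ : ℝ) ≤ 3 / 2 * N → (L₂ : ℝ) ≤ 3 / 2 * N →
      ∃ t : ℕ, t < Nat.floor ((1 / 2 : ℝ) * N) ∧ x₁ ((L₁ : ℤ) + t) ≠ x₂ ((L₂ : ℤ) + t) := by
  classical
  have hb₁ : ∀ N : ℕ, |∑ n ∈ Finset.range N, ind w (shiftZ (n : ℤ) x₁)| ≤ N := by
    intro N
    rw [abs_le]
    refine ⟨?_, sum_ind_le w x₁ N⟩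
    have h1 := sum_ind_nonneg w x₁ N
    have h2 : (0:ℝ) ≤ (N:ℝ) := Nat.cast_nonneg N
    linarith
  have hb₂ : ∀ N : ℕ, |∑ n ∈ Finset.range N, ind w (shiftZ (n : ℤ) x₂)| ≤ N := by
    intro N
    rw [abs_le]
    refine ⟨?_, sum_ind_le w x₂ N⟩
    have h1 := sum_ind_nonneg w x₂ N
    have h2 : (0:ℝ) ≤ (N:ℝ) := Nat.cast_nonneg N
    linarith
  set ε : ℝ := |c₁ - c₂| with hε_def
  have hε : 0 < ε := abs_pos.mpr (sub_ne_zero.mpr hne)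
  have hη : 0 < ε / 100 := by positivity
  obtain ⟨C₁, hC₁0, hC₁⟩ := sum_approx h₁ hb₁ hη
  obtain ⟨C₂, hC₂0, hC₂⟩ := sum_approx h₂ hb₂ hη
  obtain ⟨n₁, hn₁⟩ := exists_nat_gt (8 * (2 * C₁ + 2 * C₂ + r) / ε)
  refine ⟨max n₁ (2 * r + 4), fun N hN L₁ L₂ hL₁ hL₂ => ?_⟩
  by_contra hcon
  push_neg at hcon
  -- hcon : ∀ t, t < ⌊(1/2)*N⌋₊ → x₁ (L₁+t) = x₂ (L₂+t)
  set ℓ : ℕ := Nat.floor ((1 / 2 : ℝ) * N) with hℓ_def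
  have hN4 : 2 * r + 4 ≤ N := le_trans (le_max_right _ _) hN
  have hNn₁ : (n₁ : ℝ) ≤ N := Nat.cast_le.mpr (le_trans (le_max_left _ _) hN)
  have hNR : 8 * (2 * C₁ + 2 * C₂ + r) / ε < N := lt_of_lt_of_le hn₁ hNn₁
  have hNcast : (2 * r + 4 : ℝ) ≤ N := by exact_mod_cast hN4
  have hrR : (0:ℝ) ≤ r := Nat.cast_nonneg r
  have hℓ_le : (ℓ : ℝ) ≤ 1 / 2 * N := Nat.floor_le (by positivity)
  have hℓ_gt : (1 / 2 : ℝ) * N - 1 < ℓ := Nat.sub_one_lt_floor _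
  have hrℓ : r ≤ ℓ := Nat.le_floor (by push_cast; linarith)
  have hℓ_ge : (N : ℝ) / 4 ≤ ℓ := by linarith
  have hℓpos : (0:ℝ) < ℓ := by linarith
  -- matching of the two windows
  have hmatch : ∀ n ∈ Finset.range (ℓ - r),
      ind w (shiftZ ((L₁ + n : ℕ) : ℤ) x₁) = ind w (shiftZ ((L₂ + n : ℕ) : ℤ) x₂) := by
    intro n hn
    rw [Finset.mem_range] at hn
    apply ind_congr
    intro t
    have htn : n + (t : ℕ) < ℓ := by omega
    have h := hcon (n + (t : ℕ)) htn
    show x₁ ((t : ℕ) + ((L₁ + n : ℕ) : ℤ)) = x₂ ((t : ℕ) + ((L₂ + n : ℕ) : ℤ))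
    have e₁ : ((t : ℕ) : ℤ) + ((L₁ + n : ℕ) : ℤ) = (L₁ : ℤ) + ((n + (t : ℕ) : ℕ) : ℤ) := by
      push_cast; ring
    have e₂ : ((t : ℕ) : ℤ) + ((L₂ + n : ℕ) : ℤ) = (L₂ : ℤ) + ((n + (t : ℕ) : ℕ) : ℤ) := by
      push_cast; ring
    rw [e₁, e₂]
    exact h
  -- window sums
  set D₁ : ℝ := ∑ n ∈ Finset.range ℓ, ind w (shiftZ ((L₁ + n : ℕ) : ℤ) x₁) with hD₁def
  set D₂ : ℝ := ∑ n ∈ Finset.range ℓ, ind w (shiftZ ((L₂ + n : ℕ) : ℤ) x₂) with hD₂def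
  have hsplit₁ : ∑ n ∈ Finset.range (L₁ + ℓ), ind w (shiftZ (n : ℤ) x₁)
      = (∑ n ∈ Finset.range L₁, ind w (shiftZ (n : ℤ) x₁)) + D₁ :=
    Finset.sum_range_add (fun n => ind w (shiftZ (n : ℤ) x₁)) L₁ ℓ
  have hsplit₂ : ∑ n ∈ Finset.range (L₂ + ℓ), ind w (shiftZ (n : ℤ) x₂)
      = (∑ n ∈ Finset.range L₂, ind w (shiftZ (n : ℤ) x₂)) + D₂ :=
    Finset.sum_range_add (fun n => ind w (shiftZ (n : ℤ) x₂)) L₂ ℓ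
  -- approximation of window sums
  have hub₁ : |D₁ - c₁ * ℓ| ≤ ε / 100 * (L₁ + ℓ) + C₁ + (ε / 100 * L₁ + C₁) := by
    have e : D₁ - c₁ * ℓ = ((∑ n ∈ Finset.range (L₁ + ℓ), ind w (shiftZ (n : ℤ) x₁))
          - c₁ * ((L₁ + ℓ : ℕ) : ℝ))
        - ((∑ n ∈ Finset.range L₁, ind w (shiftZ (n : ℤ) x₁)) - c₁ * L₁) := by
      rw [hsplit₁]; push_cast; ring
    rw [e]
    have k1 := hC₁ (L₁ + ℓ)
    have k2 := hC₁ L₁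
    push_cast at k1
    calc |_ - _| ≤ |(∑ n ∈ Finset.range (L₁ + ℓ), ind w (shiftZ (n : ℤ) x₁))
            - c₁ * ((L₁ + ℓ : ℕ) : ℝ)|
          + |(∑ n ∈ Finset.range L₁, ind w (shiftZ (n : ℤ) x₁)) - c₁ * L₁| := abs_sub _ _
      _ ≤ ε / 100 * (L₁ + ℓ) + C₁ + (ε / 100 * L₁ + C₁) := by
          push_cast
          exact add_le_add k1 k2
  have hub₂ : |D₂ - c₂ * ℓ| ≤ ε / 100 * (L₂ + ℓ) + C₂ + (ε / 100 * L₂ + C₂) := by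
    have e : D₂ - c₂ * ℓ = ((∑ n ∈ Finset.range (L₂ + ℓ), ind w (shiftZ (n : ℤ) x₂))
          - c₂ * ((L₂ + ℓ : ℕ) : ℝ))
        - ((∑ n ∈ Finset.range L₂, ind w (shiftZ (n : ℤ) x₂)) - c₂ * L₂) := by
      rw [hsplit₂]; push_cast; ring
    rw [e]
    have k1 := hC₂ (L₂ + ℓ)
    have k2 := hC₂ L₂
    push_cast at k1
    calc |_ - _| ≤ |(∑ n ∈ Finset.range (L₂ + ℓ), ind w (shiftZ (n : ℤ) x₂))
            - c₂ * ((L₂ + ℓ : ℕ) : ℝ)|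
          + |(∑ n ∈ Finset.range L₂, ind w (shiftZ (n : ℤ) x₂)) - c₂ * L₂| := abs_sub _ _
      _ ≤ ε / 100 * (L₂ + ℓ) + C₂ + (ε / 100 * L₂ + C₂) := by
          push_cast
          exact add_le_add k1 k2
  -- the two window sums are close
  have hDD : |D₁ - D₂| ≤ r := by
    have hℓeq : ℓ = (ℓ - r) + r := (Nat.sub_add_cancel hrℓ).symm
    have hsp₁ : D₁ = (∑ n ∈ Finset.range (ℓ - r), ind w (shiftZ ((L₁ + n : ℕ) : ℤ) x₁))
        + ∑ n ∈ Finset.range r, ind w (shiftZ ((L₁ + ((ℓ - r) + n) : ℕ) : ℤ) x₁) := by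
      have h := Finset.sum_range_add (fun n => ind w (shiftZ ((L₁ + n : ℕ) : ℤ) x₁)) (ℓ - r) r
      rw [Nat.sub_add_cancel hrℓ] at h
      rw [hD₁def]
      exact h
    have hsp₂ : D₂ = (∑ n ∈ Finset.range (ℓ - r), ind w (shiftZ ((L₂ + n : ℕ) : ℤ) x₂))
        + ∑ n ∈ Finset.range r, ind w (shiftZ ((L₂ + ((ℓ - r) + n) : ℕ) : ℤ) x₂) := by
      have h := Finset.sum_range_add (fun n => ind w (shiftZ ((L₂ + n : ℕ) : ℤ) x₂)) (ℓ - r) r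
      rw [Nat.sub_add_cancel hrℓ] at h
      rw [hD₂def]
      exact h
    have hE : (∑ n ∈ Finset.range (ℓ - r), ind w (shiftZ ((L₁ + n : ℕ) : ℤ) x₁))
        = ∑ n ∈ Finset.range (ℓ - r), ind w (shiftZ ((L₂ + n : ℕ) : ℤ) x₂) :=
      Finset.sum_congr rfl hmatch
    set R₁ : ℝ := ∑ n ∈ Finset.range r, ind w (shiftZ ((L₁ + ((ℓ - r) + n) : ℕ) : ℤ) x₁) with hR₁
    set R₂ : ℝ := ∑ n ∈ Finset.range r, ind w (shiftZ ((L₂ + ((ℓ - r) + n) : ℕ) : ℤ) x₂) with hR₂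
    have hR₁0 : 0 ≤ R₁ := Finset.sum_nonneg fun n _ => ind_nonneg w _
    have hR₂0 : 0 ≤ R₂ := Finset.sum_nonneg fun n _ => ind_nonneg w _
    have hR₁r : R₁ ≤ r := by
      have := Finset.sum_le_card_nsmul (Finset.range r)
        (fun n => ind w (shiftZ ((L₁ + ((ℓ - r) + n) : ℕ) : ℤ) x₁)) 1 (fun n _ => ind_le_one w _)
      simpa [hR₁] using this
    have hR₂r : R₂ ≤ r := by
      have := Finset.sum_le_card_nsmul (Finset.range r)
        (fun n => ind w (shiftZ ((L₂ + ((ℓ - r) + n) : ℕ) : ℤ) x₂)) 1 (fun n _ => ind_le_one w _)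
      simpa [hR₂] using this
    have e : D₁ - D₂ = R₁ - R₂ := by rw [hsp₁, hsp₂, hE]; ring
    rw [e, abs_le]
    constructor <;> linarith
  -- final contradiction
  have tri : ε * ℓ ≤ |D₁ - c₁ * ℓ| + |D₁ - D₂| + |D₂ - c₂ * ℓ| := by
    have e : c₁ * ℓ - c₂ * ℓ = -(D₁ - c₁ * ℓ) + (D₁ - D₂) + (D₂ - c₂ * ℓ) := by ring
    have h1 : ε * ℓ = |c₁ * ℓ - c₂ * ℓ| := by
      rw [hε_def, show c₁ * (ℓ:ℝ) - c₂ * ℓ = (c₁ - c₂) * ℓ by ring, abs_mul,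
        abs_of_nonneg hℓpos.le]
    rw [h1, e]
    calc |(-(D₁ - c₁ * ℓ) + (D₁ - D₂)) + (D₂ - c₂ * ℓ)|
        ≤ |(-(D₁ - c₁ * ℓ) + (D₁ - D₂))| + |D₂ - c₂ * ℓ| := abs_add_le _ _
      _ ≤ |(-(D₁ - c₁ * ℓ))| + |D₁ - D₂| + |D₂ - c₂ * ℓ| := by
          have := abs_add_le (-(D₁ - c₁ * ℓ)) (D₁ - D₂)
          linarith
      _ = |D₁ - c₁ * ℓ| + |D₁ - D₂| + |D₂ - c₂ * ℓ| := by rw [abs_neg]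
  have hL1l : ε / 100 * (L₁ + ℓ) + (ε / 100 * L₁) + (ε / 100 * (L₂ + ℓ)) + (ε / 100 * L₂)
      ≤ ε / 100 * (7 * N) := by
    have hsum : (L₁:ℝ) + ℓ + L₁ + (L₂ + ℓ) + L₂ ≤ 7 * N := by linarith
    nlinarith [hε.le]
  have hCN : 2 * C₁ + 2 * C₂ + (r:ℝ) < ε * N / 8 := by
    rw [div_lt_iff₀ hε] at hNR
    linarith
  have hεℓ : ε * ((N:ℝ) / 4) ≤ ε * ℓ := mul_le_mul_of_nonneg_left hℓ_ge hε.le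
  have hfin : ε * ℓ ≤ ε / 100 * (7 * N) + (2 * C₁ + 2 * C₂ + r) := by
    calc ε * ℓ ≤ |D₁ - c₁ * ℓ| + |D₁ - D₂| + |D₂ - c₂ * ℓ| := tri
      _ ≤ (ε / 100 * (L₁ + ℓ) + C₁ + (ε / 100 * L₁ + C₁)) + r
          + (ε / 100 * (L₂ + ℓ) + C₂ + (ε / 100 * L₂ + C₂)) := by
          linarith [hub₁, hub₂, hDD]
      _ ≤ ε / 100 * (7 * N) + (2 * C₁ + 2 * C₂ + r) := by linarith [hL1l]
  have hNpos : (0:ℝ) < N := by linarith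
  nlinarith [hε, hNpos]

end DWS


/-- Given generic points `x i` for pairwise distinct measures `μ i`, there are words on
which the measures pairwise disagree, and there are constants `δ ∈ (0,1)` and `M` such
that for all sufficiently large `N`, the windows of length `⌊δN⌋` of `x i` starting at
positions in `[M, ⌊(2-δ)N⌋]` are pairwise disjoint among distinct indices `i`. -/
theorem disjoint_window_sets
    {A : Type*} [Fintype A] [TopologicalSpace A] [DiscreteTopology A]
    [MeasurableSpace A] [BorelSpace A]
    (X : Set (ℤ → A)) (hX : IsSubshift X) (d : ℕ) (hd : 1 ≤ d)
    (x : Fin d → (ℤ → A)) (μ : Fin d → Measure (ℤ → A))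
    (hxX : ∀ i, x i ∈ X) (hprob : ∀ i, IsProbabilityMeasure (μ i))
    (hgen : ∀ i, IsGenericPt (μ i) (x i))
    (hinj : Function.Injective μ) :
    (∀ i j : Fin d, i ≠ j →
      ∃ (r : ℕ) (w : Fin r → A), InLanguage X w ∧ μ i (cyl w) ≠ μ j (cyl w)) ∧
    ∃ (M : ℕ) (δ : ℝ), 0 < δ ∧ δ < 1 ∧ ∃ N₀ : ℕ, ∀ N : ℕ, N₀ ≤ N →
      ∀ i j : Fin d, i ≠ j → ∀ L₁ L₂ : ℕ,
        M ≤ L₁ → (L₁ : ℝ) ≤ (2 - δ) * N → M ≤ L₂ → (L₂ : ℝ) ≤ (2 - δ) * N →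
          ∃ t : ℕ, t < Nat.floor (δ * N) ∧ x i ((L₁ : ℤ) + t) ≠ x j ((L₂ : ℤ) + t) := by
  classical
  have key : ∀ i j : Fin d, i ≠ j →
      (∃ (r : ℕ) (w : Fin r → A), InLanguage X w ∧ μ i (cyl w) ≠ μ j (cyl w)) ∧
      ∃ N₀ : ℕ, ∀ N : ℕ, N₀ ≤ N → ∀ L₁ L₂ : ℕ,
        (L₁ : ℝ) ≤ 3 / 2 * N → (L₂ : ℝ) ≤ 3 / 2 * N →
        ∃ t : ℕ, t < Nat.floor ((1 / 2 : ℝ) * N) ∧ x i ((L₁ : ℤ) + t) ≠ x j ((L₂ : ℤ) + t) := by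
    intro i j hij
    have hμne : μ i ≠ μ j := fun h => hij (hinj h)
    haveI := hprob i
    haveI := hprob j
    obtain ⟨r, w, hw⟩ := DWS.exists_cyl_ne (μ i) (μ j) (x i) (x j) (hgen i) (hgen j) hμne
    have h₁ := DWS.tendsto_avg0 (μ i) (x i) (hgen i) w
    have h₂ := DWS.tendsto_avg0 (μ j) (x j) (hgen j) w
    have hc : ((μ i) (cyl w)).toReal ≠ ((μ j) (cyl w)).toReal := fun h =>
      hw ((ENNReal.toReal_eq_toReal_iff' (measure_ne_top _ _) (measure_ne_top _ _)).mp h)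
    obtain ⟨N₀, hN₀⟩ := DWS.pair_claim (x i) (x j) w h₁ h₂ hc
    have hlang : InLanguage X w := by
      rcases hc.lt_or_gt with h | h
      · exact DWS.inLanguage_of_pos X (x j) (hxX j) w h₂ (lt_of_le_of_lt ENNReal.toReal_nonneg h)
      · exact DWS.inLanguage_of_pos X (x i) (hxX i) w h₁ (lt_of_le_of_lt ENNReal.toReal_nonneg h)
    exact ⟨⟨r, w, hlang, hw⟩, N₀, hN₀⟩
  have key2 : ∀ i j : Fin d, ∃ N₀ : ℕ, i ≠ j → ∀ N : ℕ, N₀ ≤ N → ∀ L₁ L₂ : ℕ,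
      (L₁ : ℝ) ≤ 3 / 2 * N → (L₂ : ℝ) ≤ 3 / 2 * N →
      ∃ t : ℕ, t < Nat.floor ((1 / 2 : ℝ) * N) ∧ x i ((L₁ : ℤ) + t) ≠ x j ((L₂ : ℤ) + t) := by
    intro i j
    by_cases h : i ≠ j
    · obtain ⟨N₀, hN₀⟩ := (key i j h).2
      exact ⟨N₀, fun _ => hN₀⟩
    · exact ⟨0, fun h' => absurd h' h⟩
  choose F hF using key2
  refine ⟨fun i j hij => (key i j hij).1, 0, 1/2, by norm_num, by norm_num,
    Finset.sup (Finset.univ ×ˢ Finset.univ) (fun p : Fin d × Fin d => F p.1 p.2), ?_⟩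
  intro N hN i j hij L₁ L₂ _ hL₁ _ hL₂
  have hFN : F i j ≤ N :=
    le_trans (Finset.le_sup (f := fun p : Fin d × Fin d => F p.1 p.2)
      (by simp : ((i, j) : Fin d × Fin d) ∈ Finset.univ ×ˢ Finset.univ)) hN
  have hL₁' : (L₁ : ℝ) ≤ 3 / 2 * N := by norm_num at hL₁ ⊢; linarith
  have hL₂' : (L₂ : ℝ) ≤ 3 / 2 * N := by norm_num at hL₂ ⊢; linarith
  exact hF i j hij N hFN L₁ L₂ hL₁' hL₂'
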